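/- A finite-dimensional left Leibniz algebra L over a field of characteristic 0 such that all left multiplication operators [x,·] ∈ End L are nilpotent is itself nilpotent (i.e., the lower central series L ⊇ [L,L] ⊇ [L,[L,L]]+[[L,L],L] ⊇ ... terminates at 0). -/

import Mathlib

/-- Span of all brackets `[a,b]` with `a ∈ A`, `b ∈ B`. -/
def bracketSpan {k L : Type*} [Field k] [AddCommGroup L] [Module k L]
    (brk : L →ₗ[k] L →ₗ[k] L) (A B : Submodule k L) : Submodule k L :=
  Submodule.span k {z : L | ∃ a ∈ A, ∃ b ∈ B, z = brk a b}

/-- Lower central series by total weight: `lcs brk m` is the span of all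
brackets of elements of total weight `m+1`; `lcs brk 0 = L`,
`lcs brk (m+1) = Σ_{i+j=m} [lcs brk i, lcs brk j]`. -/
def lcs {k L : Type*} [Field k] [AddCommGroup L] [Module k L]
    (brk : L →ₗ[k] L →ₗ[k] L) : ℕ → Submodule k L
  | 0 => ⊤
  | m + 1 => ⨆ i : Fin (m + 1), bracketSpan brk (lcs brk i) (lcs brk (m - i))
decreasing_by
  · exact i.isLt
  · have := i.isLt; omega

section Aux
variable {k L : Type*} [Field k] [AddCommGroup L] [Module k L] (brk : L →ₗ[k] L →ₗ[k] L)

lemma mem_bracketSpan {A B : Submodule k L} {a b : L} (ha : a ∈ A) (hb : b ∈ B) :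
    brk a b ∈ bracketSpan brk A B := Submodule.subset_span ⟨a, ha, b, hb, rfl⟩

lemma bracketSpan_le {A B T : Submodule k L} (h : ∀ a ∈ A, ∀ b ∈ B, brk a b ∈ T) :
    bracketSpan brk A B ≤ T := by
  rw [bracketSpan, Submodule.span_le]
  rintro z ⟨a, ha, b, hb, rfl⟩
  exact h a ha b hb

lemma bracketSpan_mono {A A' B B' : Submodule k L} (hA : A ≤ A') (hB : B ≤ B') :
    bracketSpan brk A B ≤ bracketSpan brk A' B' :=
  bracketSpan_le brk fun a ha b hb => mem_bracketSpan brk (hA ha) (hB hb)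

/-- Left-normed lower central series. -/
def leftC : ℕ → Submodule k L
  | 0 => ⊤
  | m + 1 => bracketSpan brk ⊤ (leftC m)

lemma bracketSpan_leftC_le
    (leib : ∀ x y z : L, brk x (brk y z) = brk (brk x y) z + brk y (brk x z)) :
    ∀ i j, bracketSpan brk (leftC brk i) (leftC brk j) ≤ leftC brk (i + j + 1) := by
  intro i
  induction i with
  | zero =>
    intro j
    simpa [leftC, Nat.zero_add] using bracketSpan_mono brk (le_top (a := leftC brk 0)) le_rfl
  | succ i ih =>
    intro j
    apply bracketSpan_le
    intro a ha b hb
    have key : leftC brk (i + 1) ≤ Submodule.comap (brk.flip b) (leftC brk (i + 1 + j + 1)) := by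
      show bracketSpan brk ⊤ (leftC brk i) ≤ _
      apply bracketSpan_le
      intro x _ t ht
      simp only [Submodule.mem_comap, LinearMap.flip_apply]
      have e : brk (brk x t) b = brk x (brk t b) - brk t (brk x b) := by
        rw [eq_sub_iff_add_eq]; exact (leib x t b).symm
      have h1 : brk x (brk t b) ∈ leftC brk (i + j + 2) :=
        mem_bracketSpan brk Submodule.mem_top (ih j (mem_bracketSpan brk ht hb))
      have h2 : brk t (brk x b) ∈ leftC brk (i + j + 2) := by
        have hxb : brk x b ∈ leftC brk (j + 1) := mem_bracketSpan brk Submodule.mem_top hb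
        have := ih (j + 1) (mem_bracketSpan brk ht hxb)
        simpa [show i + (j + 1) + 1 = i + j + 2 by omega] using this
      have : brk (brk x t) b ∈ leftC brk (i + j + 2) := by
        rw [e]; exact Submodule.sub_mem _ h1 h2
      simpa [show i + 1 + j + 1 = i + j + 2 by omega] using this
    exact key ha

lemma lcs_le_leftC
    (leib : ∀ x y z : L, brk x (brk y z) = brk (brk x y) z + brk y (brk x z)) :
    ∀ m, lcs brk m ≤ leftC brk m := by
  intro m
  induction m using Nat.strong_induction_on with
  | _ m ih =>
    match m with
    | 0 => rw [lcs]; exact le_top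
    | m + 1 =>
      rw [lcs]
      apply iSup_le
      intro i
      have h1 : lcs brk i ≤ leftC brk i := ih i (by omega)
      have h2 : lcs brk (m - i) ≤ leftC brk (m - i) := ih (m - i) (by omega)
      refine le_trans (bracketSpan_mono brk h1 h2) ?_
      refine le_trans (bracketSpan_leftC_le brk leib i (m - i)) ?_
      have : (i : ℕ) + (m - i) + 1 = m + 1 := by have := i.isLt; omega
      rw [this]

end Aux

attribute [local instance 100] LieRing.ofAssociativeRing

/-- Engel theorem for Leibniz algebras: a finite-dimensional
left Leibniz algebra over a field of characteristic 0 in which all left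
multiplication operators are nilpotent is itself nilpotent. -/
theorem stmt15 {k L : Type*} [Field k] [CharZero k] [AddCommGroup L] [Module k L]
    [FiniteDimensional k L]
    (brk : L →ₗ[k] L →ₗ[k] L)
    (leib : ∀ x y z : L,
      brk x (brk y z) = brk (brk x y) z + brk y (brk x z))
    (hnil : ∀ x : L, ∃ N : ℕ, (brk x) ^ N = 0) :
    ∃ N : ℕ, lcs brk N = ⊥ := by
  -- the Lie subalgebra of endomorphisms given by left multiplications
  let K : LieSubalgebra k (Module.End k L) :=
    { carrier := LinearMap.range brk
      add_mem' := fun ha hb => add_mem ha hb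
      smul_mem' := fun c f hf => Submodule.smul_mem _ c hf
      zero_mem' := zero_mem _
      lie_mem' := by
        rintro f g ⟨a, rfl⟩ ⟨b, rfl⟩
        refine ⟨brk a b, ?_⟩
        ext z
        have := leib a b z
        simp only [Ring.lie_def, LinearMap.sub_apply, Module.End.mul_apply]
        rw [eq_sub_iff_add_eq]
        simpa [add_comm] using (leib a b z).symm }
  have hnilK : ∀ x : K, _root_.IsNilpotent (LieModule.toEnd k K L x) := by
    rintro ⟨f, a, rfl⟩
    obtain ⟨N, hN⟩ := hnil a
    refine ⟨N, ?_⟩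
    have he : LieModule.toEnd k K L ⟨brk a, ⟨a, rfl⟩⟩ = brk a := by
      ext z; rfl
    rw [he]; exact hN
  have hNoeth : IsNoetherian k K := inferInstance
  have hEng : LieModule.IsNilpotent K L :=
    LieAlgebra.isEngelian_of_isNoetherian L hnilK
  obtain ⟨n, hn⟩ := (LieModule.isNilpotent_iff k K L).mp hEng
  -- leftC is contained in the lower central series of the K-module L
  have hleft : ∀ m, leftC brk m ≤ (LieModule.lowerCentralSeries k K L m : Submodule k L) := by
    intro m
    induction m with
    | zero => simp [leftC]
    | succ m ih =>
      show bracketSpan brk ⊤ (leftC brk m) ≤ _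
      apply bracketSpan_le
      intro a _ b hb
      have hb' : b ∈ LieModule.lowerCentralSeries k K L m := ih hb
      have : (⁅(⟨brk a, ⟨a, rfl⟩⟩ : K), b⁆ : L) ∈
          ⁅(⊤ : LieIdeal k K), LieModule.lowerCentralSeries k K L m⁆ :=
        LieSubmodule.lie_mem_lie (LieSubmodule.mem_top _) hb'
      rw [LieModule.lowerCentralSeries_succ]
      exact this
  refine ⟨n, le_bot_iff.mp ?_⟩
  calc lcs brk n ≤ leftC brk n := lcs_le_leftC brk leib n
    _ ≤ (LieModule.lowerCentralSeries k K L n : Submodule k L) := hleft n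
    _ = ⊥ := by rw [hn]; rfl
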